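/- Let f be a homogeneous Darboux polynomial of degree m of the three-dimensional Lotka–Volterra system with cofactor α·x1 + β·x2 + γ·x3. If s ≠ 0 and γ ∉ {s, 2s, ..., ms}, and moreover γ ≠ 0, then x2 divides f. -/

import Mathlib

open MvPolynomial

/-- Lie derivative along the 3D Lotka-Volterra vector field with parameters r, s, t. -/
noncomputable def LV (r s t : ℝ) (f : MvPolynomial (Fin 3) ℝ) : MvPolynomial (Fin 3) ℝ :=
  X 0 * (C r * X 1 + C s * X 2) * pderiv 0 f
  + X 1 * (C (-r) * X 0 + C t * X 2) * pderiv 1 f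
  + X 2 * (C (-s) * X 0 + C (-t) * X 1) * pderiv 2 f

lemma coeff_pderiv' {σ : Type*} [DecidableEq σ] (i : σ) (d : σ →₀ ℕ) (f : MvPolynomial σ ℝ) :
    coeff d (pderiv i f) = ((d i : ℝ) + 1) * coeff (d + Finsupp.single i 1) f := by
  induction f using MvPolynomial.induction_on' with
  | add p q hp hq => simp [hp, hq, mul_add]
  | monomial s a =>
    rw [pderiv_monomial, coeff_monomial, coeff_monomial]
    split_ifs with h1 h2 h2
    · subst h2
      rw [Finsupp.add_apply, Finsupp.single_apply, if_pos rfl]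
      push_cast; ring
    · by_cases hsi : s i = 0
      · simp [hsi]
      · exfalso; apply h2
        rw [← h1, tsub_add_cancel_of_le]
        rwa [Finsupp.single_le_iff, Nat.one_le_iff_ne_zero]
    · exfalso; apply h1; subst h2; simp
    · simp

noncomputable def ee (a c : ℕ) : Fin 3 →₀ ℕ := Finsupp.single 0 a + Finsupp.single 2 c

lemma ee_apply0 (a c : ℕ) : ee a c 0 = a := by simp [ee]
lemma ee_apply1 (a c : ℕ) : ee a c 1 = 0 := by simp [ee, Finsupp.single_apply]
lemma ee_apply2 (a c : ℕ) : ee a c 2 = c := by simp [ee, Finsupp.single_apply]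

lemma ee_add0 (a c : ℕ) : ee a c + Finsupp.single 0 1 = ee (a+1) c := by
  simp [ee, Finsupp.single_add]; abel

lemma ee_add2 (a c : ℕ) : ee a c + Finsupp.single 2 1 = ee a (c+1) := by
  simp [ee, Finsupp.single_add]; abel

lemma ee_sub0 (a c : ℕ) : ee (a+1) c - Finsupp.single 0 1 = ee a c := by
  rw [← ee_add0]; exact add_tsub_cancel_right _ _

lemma ee_sub2 (a c : ℕ) : ee a (c+1) - Finsupp.single 2 1 = ee a c := by
  rw [← ee_add2]; exact add_tsub_cancel_right _ _

lemma ee_weight (a c : ℕ) : (Finsupp.weight (1 : Fin 3 → ℕ)) (ee a c) = a + c := by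
  simp [ee, Finsupp.weight_apply, Finsupp.sum_add_index', Finsupp.sum_single_index]

theorem stmt10 (r s t : ℝ) (m : ℕ) (f : MvPolynomial (Fin 3) ℝ)
    (hhom : f.IsHomogeneous m) (α β γ : ℝ)
    (hD : LV r s t f = (C α * X 0 + C β * X 1 + C γ * X 2) * f)
    (hs : s ≠ 0) (hns : ∀ n : ℕ, 1 ≤ n → n ≤ m → γ ≠ n * s)
    (hγ : γ ≠ 0) :
    X 1 ∣ f := by
  have hring : LV r s t f =
      C r * (X 1 * (X 0 * pderiv 0 f)) + C s * (X 0 * (X 2 * pderiv 0 f))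
      + (C (-r) * (X 1 * (X 0 * pderiv 1 f)) + C t * (X 1 * (X 2 * pderiv 1 f)))
      + (C (-s) * (X 0 * (X 2 * pderiv 2 f)) + C (-t) * (X 1 * (X 2 * pderiv 2 f))) := by
    rw [LV]; ring
  have hrhs : (C α * X 0 + C β * X 1 + C γ * X 2) * f
      = C α * (X 0 * f) + C β * (X 1 * f) + C γ * (X 2 * f) := by ring
  rw [hring, hrhs] at hD
  -- base equation
  have eq1 : ∀ c : ℕ, γ * coeff (ee 0 c) f = 0 := by
    intro c
    have h := congrArg (coeff (ee 0 (c+1))) hD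
    simpa [coeff_X_mul', Finsupp.mem_support_iff, ee_apply0, ee_apply1, ee_apply2,
      ee_sub0, ee_sub2] using h.symm
  have eq2 : ∀ a c : ℕ,
      s * ((a:ℝ)+1) * coeff (ee (a+1) c) f - s * ((c:ℝ)+1) * coeff (ee a (c+1)) f
      = α * coeff (ee a (c+1)) f + γ * coeff (ee (a+1) c) f := by
    intro a c
    have h := congrArg (coeff (ee (a+1) (c+1))) hD
    simp only [coeff_add, coeff_C_mul, coeff_X_mul', Finsupp.mem_support_iff,
      ee_apply0, ee_apply1, ee_apply2, ee_sub0, ee_sub2, coeff_pderiv', ee_add0, ee_add2] at h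
    norm_num at h
    linear_combination h
  have main : ∀ a c : ℕ, coeff (ee a c) f = 0 := by
    intro a
    induction a with
    | zero => intro c; exact (mul_eq_zero.mp (eq1 c)).resolve_left hγ
    | succ a ih =>
      intro c
      by_contra hne
      have hdeg : a + 1 + c = m := by
        have := hhom hne
        rwa [ee_weight] at this
      have h2 := eq2 a c
      rw [ih (c+1)] at h2
      have hkey : (s * ((a:ℝ)+1) - γ) * coeff (ee (a+1) c) f = 0 := by linear_combination h2
      have := (mul_eq_zero.mp hkey).resolve_right hne
      have hγn : γ ≠ ((a+1 : ℕ) : ℝ) * s := hns (a+1) (by omega) (by omega)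
      apply hγn
      push_cast
      linarith [this]
  rw [f.as_sum]
  apply Finset.dvd_sum
  intro d hd
  rw [X_dvd_monomial]
  by_cases hd1 : d 1 = 0
  · left
    have hde : d = ee (d 0) (d 2) := by
      ext i
      fin_cases i
      · simp [ee_apply0]
      · simpa [ee_apply1] using hd1
      · simp [ee_apply2]
    rw [hde]; exact main _ _
  · right; exact hd1
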